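/- For every integer m ≥ 2 there exists a (2^m−1, 2)-DTA(18^m; 4, ((2^m)^1 (3^m)^3)), i.e., a (2^m−1, 2)-detecting array with 18^m rows on four factors, one with 2^m levels and three with 3^m levels, achieving the lower bound 18^m = 2^m·3^m·3^m. -/

import Mathlib

/-- An array `A` (rows indexed by `R`, columns by `J`) is of type `v` if every
entry in column `j` lies in `Z_{v j} = {0, 1, …, v j - 1}`. -/
def IsArray {R J : Type*} (v : J → ℕ) (A : R → J → ℕ) : Prop :=
  ∀ r j, A r j < v j

/-- An `s`-way interaction: a set of `s` pairs `(j, σ)` with pairwise distinct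
column indices `j` and value `σ ∈ Z_{v j}`. -/
def IsInteraction {J : Type*} [DecidableEq J] (v : J → ℕ) (s : ℕ)
    (T : Finset (J × ℕ)) : Prop :=
  T.card = s ∧ (T.image Prod.fst).card = s ∧ ∀ p ∈ T, p.2 < v p.1

/-- `rho A T`: the set of rows of `A` in which the interaction `T` is covered. -/
def rho {R J : Type*} [Fintype R] (A : R → J → ℕ) (T : Finset (J × ℕ)) :
    Finset R :=
  Finset.univ.filter fun r => ∀ p ∈ T, A r p.1 = p.2

/-- `rhoSet A 𝒯 = ⋃_{T ∈ 𝒯} rho A T`. -/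
def rhoSet {R J : Type*} [Fintype R] [DecidableEq R] (A : R → J → ℕ)
    (Ts : Finset (Finset (J × ℕ))) : Finset R :=
  Ts.sup (rho A)

/-- A `(d,t)`-detecting array of type `v`: for every `t`-way interaction `T` and
every set `𝒯` of exactly `d` `t`-way interactions,
`ρ(A,T) ⊆ ρ(A,𝒯) ↔ T ∈ 𝒯`. -/
def IsDTA {R J : Type*} [Fintype R] [DecidableEq R] [DecidableEq J] (v : J → ℕ) (d t : ℕ)
    (A : R → J → ℕ) : Prop :=
  IsArray v A ∧
    ∀ T : Finset (J × ℕ), IsInteraction v t T →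
      ∀ Ts : Finset (Finset (J × ℕ)), Ts.card = d →
        (∀ T' ∈ Ts, IsInteraction v t T') →
          (rho A T ⊆ rhoSet A Ts ↔ T ∈ Ts)

/-- A mixed covering array `MCA_λ(N; t, k, v)`: an array of type `v` such that
`|ρ(A,T)| ≥ λ` for every `t`-way interaction `T`. -/
def IsMCA {R J : Type*} [Fintype R] [DecidableEq J] (v : J → ℕ) (lam t : ℕ)
    (A : R → J → ℕ) : Prop :=
  IsArray v A ∧ ∀ T : Finset (J × ℕ), IsInteraction v t T → lam ≤ (rho A T).card

/-- Super-simple of strength `t`: every `(t+1)`-way interaction is covered by at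
most one row. -/
def IsSuperSimple {R J : Type*} [Fintype R] [DecidableEq J] (v : J → ℕ) (t : ℕ)
    (A : R → J → ℕ) : Prop :=
  ∀ T : Finset (J × ℕ), IsInteraction v (t + 1) T → (rho A T).card ≤ 1

/-- An orthogonal array `OA_λ(t, k, v)`: all entries in `Z_v` and
`|ρ(A,T)| = λ` for every `t`-way interaction `T`. (The size requirement
`N = λ·v^t` is imposed on the row-index type in the statements.) -/
def IsOA {R J : Type*} [Fintype R] [DecidableEq J] (vlev lam t : ℕ)
    (A : R → J → ℕ) : Prop :=
  IsArray (fun _ : J => vlev) A ∧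
    ∀ T : Finset (J × ℕ), IsInteraction (fun _ : J => vlev) t T →
      (rho A T).card = lam

/-- `Te` is an extension of the interaction `T`: it is obtained from `T` by
adjoining one pair `(j, σ)` with `σ ∈ Z_{v j}` whose column index `j` occurs in
no pair of `T`. -/
def IsExtension {J : Type*} [DecidableEq J] (v : J → ℕ)
    (T Te : Finset (J × ℕ)) : Prop :=
  ∃ p : J × ℕ, p.2 < v p.1 ∧ (∀ q ∈ T, q.1 ≠ p.1) ∧ Te = insert p T

/-- `A` is `d`-extendible (with respect to strength `t`): for every `t`-way
interaction `T` and every list of `d` extensions `T_1, …, T_d` of `T`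
(repetitions allowed), `ρ(A,T) \ (ρ(A,T_1) ∪ ⋯ ∪ ρ(A,T_d))` is nonempty. -/
def IsExtendible {R J : Type*} [Fintype R] [DecidableEq J] (v : J → ℕ)
    (d t : ℕ) (A : R → J → ℕ) : Prop :=
  ∀ T : Finset (J × ℕ), IsInteraction v t T →
    ∀ Te : Fin d → Finset (J × ℕ), (∀ i, IsExtension v T (Te i)) →
      ∃ r ∈ rho A T, ∀ i, r ∉ rho A (Te i)


namespace Stmt15Aux

/-! ### A base array: 18 rows, columns `(a, x, y, (a+x+y) mod 3)` with
`a ∈ Z_2`, `x, y ∈ Z_3`, where row `d` decodes as `a = d % 2`, `x = d/2 % 3`,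
`y = d/6`. -/

def B (d j : ℕ) : ℕ :=
  if j = 0 then d % 2
  else if j = 1 then d / 2 % 3
  else if j = 2 then d / 6
  else (d % 2 + d / 2 % 3 + d / 6) % 3

def vb (j : ℕ) : ℕ := if j = 0 then 2 else 3

lemma vb_two (j : ℕ) : 2 ≤ vb j := by unfold vb; split <;> norm_num

lemma vb_le3 (j : ℕ) : vb j ≤ 3 := by unfold vb; split <;> norm_num

lemma B_lt (d j : ℕ) (hd : d < 18) : B d j < vb j := by
  unfold B vb; repeat' split
  all_goals omega

lemma base_ss : ∀ d e : Fin 18, ∀ j1 j2 j3 : Fin 4,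
    j1 ≠ j2 → j1 ≠ j3 → j2 ≠ j3 →
    B d.val j1.val = B e.val j1.val → B d.val j2.val = B e.val j2.val →
    B d.val j3.val = B e.val j3.val → d = e := by decide

lemma base_cov : ∀ j1 j2 : Fin 4, j1 ≠ j2 → ∀ σ1 σ2 : Fin 3,
    ((j1 : ℕ) = 0 → (σ1 : ℕ) < 2) → ((j2 : ℕ) = 0 → (σ2 : ℕ) < 2) →
    ∃ d1 d2 : Fin 18, d1 ≠ d2 ∧ B d1.val j1.val = σ1.val ∧ B d1.val j2.val = σ2.val
      ∧ B d2.val j1.val = σ1.val ∧ B d2.val j2.val = σ2.val := by decide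

/-! ### Base-`b` digit arithmetic -/

lemma sum_digits_lt (b : ℕ) (hb : 1 ≤ b) : ∀ (m : ℕ) (f : ℕ → ℕ), (∀ i < m, f i < b) →
    ∑ i ∈ Finset.range m, f i * b ^ i < b ^ m := by
  intro m
  induction m with
  | zero => intro f _; simpa using hb
  | succ n ih =>
    intro f hf
    rw [Finset.sum_range_succ, pow_succ]
    have h1 : ∑ i ∈ Finset.range n, f i * b ^ i < b ^ n := ih f (fun i hi => hf i (by omega))
    calc ∑ i ∈ Finset.range n, f i * b ^ i + f n * b ^ n
        < b ^ n + f n * b ^ n := by omega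
      _ = (f n + 1) * b ^ n := by ring
      _ ≤ b * b ^ n := Nat.mul_le_mul_right _ (hf n (by omega))
      _ = b ^ n * b := Nat.mul_comm _ _

lemma sum_shift (b : ℕ) (m : ℕ) (f : ℕ → ℕ) :
    ∑ i ∈ Finset.range (m + 1), f i * b ^ i
      = (∑ i ∈ Finset.range m, f (i + 1) * b ^ i) * b + f 0 := by
  rw [Finset.sum_range_succ', Finset.sum_mul]
  simp [pow_succ, Nat.mul_assoc, Nat.mul_comm]

lemma div_step (b S f0 : ℕ) (hb0 : 0 < b) (hf0 : f0 < b) : (S * b + f0) / b = S := by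
  rw [Nat.add_comm, Nat.add_mul_div_right _ _ hb0, Nat.div_eq_of_lt hf0, Nat.zero_add]

lemma digit_extract (b : ℕ) (hb : 2 ≤ b) : ∀ (i m : ℕ) (f : ℕ → ℕ), (∀ k < m, f k < b) →
    i < m → (∑ k ∈ Finset.range m, f k * b ^ k) / b ^ i % b = f i := by
  intro i
  induction i with
  | zero =>
    intro m f hf hi
    obtain ⟨n, rfl⟩ : ∃ n, m = n + 1 := ⟨m - 1, by omega⟩
    rw [sum_shift]
    simp only [pow_zero, Nat.div_one]
    rw [Nat.add_comm, Nat.add_mul_mod_self_right, Nat.mod_eq_of_lt (hf 0 (by omega))]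
  | succ i ih =>
    intro m f hf hi
    obtain ⟨n, rfl⟩ : ∃ n, m = n + 1 := ⟨m - 1, by omega⟩
    rw [sum_shift]
    have hb0 : 0 < b := by omega
    have hdiv : ((∑ k ∈ Finset.range n, f (k + 1) * b ^ k) * b + f 0) / b ^ (i + 1)
        = (∑ k ∈ Finset.range n, f (k + 1) * b ^ k) / b ^ i := by
      rw [pow_succ, Nat.mul_comm (b ^ i) b, ← Nat.div_div_eq_div_mul,
        div_step _ _ _ hb0 (hf 0 (by omega))]
    rw [hdiv]
    exact ih n (fun k => f (k + 1)) (fun k hk => hf (k + 1) (by omega)) (by omega)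

lemma digits_sum (b : ℕ) (hb : 2 ≤ b) : ∀ (m r : ℕ), r < b ^ m →
    ∑ i ∈ Finset.range m, (r / b ^ i % b) * b ^ i = r := by
  intro m
  induction m with
  | zero => intro r hr; simp at hr ⊢; omega
  | succ n ih =>
    intro r hr
    have hb0 : 0 < b := by omega
    have key : ∀ i, r / b ^ (i + 1) = (r / b) / b ^ i := by
      intro i; rw [pow_succ, Nat.mul_comm, ← Nat.div_div_eq_div_mul]
    rw [sum_shift]
    simp only [key]
    rw [ih (r / b) (by
      have h2 : r < b ^ n * b := by rw [← pow_succ]; exact hr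
      exact Nat.div_lt_of_lt_mul (by rwa [Nat.mul_comm] at h2))]
    simp only [pow_zero, Nat.div_one]
    rw [Nat.mul_comm]
    exact Nat.div_add_mod r b

/-! ### The product array: `m`-fold product of the base array -/

def Arr (m r j : ℕ) : ℕ :=
  ∑ i ∈ Finset.range m, B (r / 18 ^ i % 18) j * (vb j) ^ i

lemma dig_lt (r i : ℕ) : r / 18 ^ i % 18 < 18 := Nat.mod_lt _ (by norm_num)

lemma Arr_lt (m r j : ℕ) : Arr m r j < vb j ^ m :=
  sum_digits_lt _ (le_trans (by norm_num) (vb_two j)) m _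
    (fun i _ => B_lt _ _ (dig_lt r i))

lemma Arr_digit (m r j i : ℕ) (hi : i < m) :
    Arr m r j / (vb j) ^ i % vb j = B (r / 18 ^ i % 18) j :=
  digit_extract _ (vb_two j) i m _ (fun k _ => B_lt _ _ (dig_lt r k)) hi

/-- Super-simplicity: two rows agreeing in three distinct columns are equal. -/
lemma Arr_ss (m : ℕ) (r s : ℕ) (hr : r < 18 ^ m) (hs : s < 18 ^ m)
    (j1 j2 j3 : Fin 4) (h12 : j1 ≠ j2) (h13 : j1 ≠ j3) (h23 : j2 ≠ j3)
    (e1 : Arr m r j1 = Arr m s j1) (e2 : Arr m r j2 = Arr m s j2)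
    (e3 : Arr m r j3 = Arr m s j3) : r = s := by
  have hdig : ∀ i < m, r / 18 ^ i % 18 = s / 18 ^ i % 18 := by
    intro i hi
    have key : ∀ j : Fin 4, Arr m r j = Arr m s j →
        B (r / 18 ^ i % 18) (j : ℕ) = B (s / 18 ^ i % 18) (j : ℕ) := by
      intro j he
      rw [← Arr_digit m r j i hi, ← Arr_digit m s j i hi, he]
    have := base_ss ⟨r / 18 ^ i % 18, dig_lt r i⟩ ⟨s / 18 ^ i % 18, dig_lt s i⟩
      j1 j2 j3 h12 h13 h23 (key j1 e1) (key j2 e2) (key j3 e3)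
    exact congrArg Fin.val this
  calc r = ∑ i ∈ Finset.range m, (r / 18 ^ i % 18) * 18 ^ i :=
        (digits_sum 18 (by norm_num) m r hr).symm
    _ = ∑ i ∈ Finset.range m, (s / 18 ^ i % 18) * 18 ^ i :=
        Finset.sum_congr rfl (fun i hi => by rw [hdig i (Finset.mem_range.mp hi)])
    _ = s := digits_sum 18 (by norm_num) m s hs

/-- Coverage: every pair of values in two distinct columns is covered by at
least `2 ^ m` rows. -/
lemma Arr_cov (m : ℕ) (j1 j2 : Fin 4) (hne : j1 ≠ j2) (σ1 σ2 : ℕ)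
    (h1 : σ1 < vb j1 ^ m) (h2 : σ2 < vb j2 ^ m) :
    ∃ g : (Fin m → Fin 2) → ℕ, Function.Injective g ∧
      ∀ c, g c < 18 ^ m ∧ Arr m (g c) j1 = σ1 ∧ Arr m (g c) j2 = σ2 := by
  set s1 : ℕ → ℕ := fun i => σ1 / (vb j1) ^ i % vb j1 with hs1
  set s2 : ℕ → ℕ := fun i => σ2 / (vb j2) ^ i % vb j2 with hs2
  have hs1lt : ∀ i, s1 i < vb j1 := fun i => Nat.mod_lt _ (by have := vb_two (j1:ℕ); omega)
  have hs2lt : ∀ i, s2 i < vb j2 := fun i => Nat.mod_lt _ (by have := vb_two (j2:ℕ); omega)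
  have hs1lt3 : ∀ i, s1 i < 3 := fun i => lt_of_lt_of_le (hs1lt i) (vb_le3 _)
  have hs2lt3 : ∀ i, s2 i < 3 := fun i => lt_of_lt_of_le (hs2lt i) (vb_le3 _)
  have H : ∀ i : ℕ, ∃ d1 d2 : Fin 18, d1 ≠ d2 ∧ B d1.val j1.val = s1 i ∧ B d1.val j2.val = s2 i
      ∧ B d2.val j1.val = s1 i ∧ B d2.val j2.val = s2 i := by
    intro i
    have c1 : (j1 : ℕ) = 0 → ((⟨s1 i, hs1lt3 i⟩ : Fin 3) : ℕ) < 2 := by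
      intro h
      have h2 := hs1lt i
      simp only [vb, h, if_pos] at h2
      simpa using h2
    have c2 : (j2 : ℕ) = 0 → ((⟨s2 i, hs2lt3 i⟩ : Fin 3) : ℕ) < 2 := by
      intro h
      have h2 := hs2lt i
      simp only [vb, h, if_pos] at h2
      simpa using h2
    exact base_cov j1 j2 hne ⟨s1 i, hs1lt3 i⟩ ⟨s2 i, hs2lt3 i⟩ c1 c2
  choose D1 D2 hD hB11 hB12 hB21 hB22 using H
  set D : ℕ → Fin 2 → Fin 18 := fun i t => if t = 0 then D1 i else D2 i with hD'
  have hDB1 : ∀ i t, B (D i t).val j1.val = s1 i := by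
    intro i t
    by_cases ht : t = 0
    · simp only [D, ht, if_pos]; exact hB11 i
    · simp only [D, if_neg ht]; exact hB21 i
  have hDB2 : ∀ i t, B (D i t).val j2.val = s2 i := by
    intro i t
    by_cases ht : t = 0
    · simp only [D, ht, if_pos]; exact hB12 i
    · simp only [D, if_neg ht]; exact hB22 i
  have hDinj : ∀ i, Function.Injective (D i) := by
    intro i t t' h
    by_cases ht : t = 0 <;> by_cases ht' : t' = 0
    · rw [ht, ht']
    · rw [ht] at h ⊢
      simp only [D, if_pos, if_neg ht'] at h
      exact absurd h (hD i)
    · rw [ht'] at h ⊢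
      simp only [D, if_pos, if_neg ht] at h
      exact absurd h.symm (hD i)
    · omega
  classical
  set cext : (Fin m → Fin 2) → ℕ → Fin 2 := fun c i => if h : i < m then c ⟨i, h⟩ else 0
  refine ⟨fun c => ∑ i ∈ Finset.range m, (D i (cext c i)).val * 18 ^ i, ?_, ?_⟩
  · intro c c' h
    have hdig : ∀ i, i < m → (D i (cext c i)).val = (D i (cext c' i)).val := by
      intro i hi
      have e1 : (∑ k ∈ Finset.range m, (D k (cext c k)).val * 18 ^ k) / 18 ^ i % 18
          = (D i (cext c i)).val :=
        digit_extract 18 (by norm_num) i m (fun k => (D k (cext c k)).val)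
          (fun k _ => (D k (cext c k)).isLt) hi
      have e2 : (∑ k ∈ Finset.range m, (D k (cext c' k)).val * 18 ^ k) / 18 ^ i % 18
          = (D i (cext c' i)).val :=
        digit_extract 18 (by norm_num) i m (fun k => (D k (cext c' k)).val)
          (fun k _ => (D k (cext c' k)).isLt) hi
      have hh : (∑ k ∈ Finset.range m, (D k (cext c k)).val * 18 ^ k)
          = ∑ k ∈ Finset.range m, (D k (cext c' k)).val * 18 ^ k := h
      rw [← e1, ← e2, hh]
    funext i
    have := hdig i.val i.isLt
    have hD2 : D i.val (cext c i.val) = D i.val (cext c' i.val) := Fin.val_injective this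
    have := hDinj i.val hD2
    simpa [cext, i.isLt] using this
  · intro c
    have hlt : ∀ i, (D i (cext c i)).val < 18 := fun i => (D i (cext c i)).isLt
    refine ⟨sum_digits_lt 18 (by norm_num) m _ (fun i _ => hlt i), ?_, ?_⟩
    · have : Arr m (∑ i ∈ Finset.range m, (D i (cext c i)).val * 18 ^ i) j1
          = ∑ i ∈ Finset.range m, s1 i * (vb j1) ^ i := by
        unfold Arr
        refine Finset.sum_congr rfl (fun i hi => ?_)
        rw [digit_extract 18 (by norm_num) i m _ (fun k _ => hlt k) (Finset.mem_range.mp hi),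
          hDB1]
      rw [this, hs1]
      exact digits_sum _ (vb_two _) m σ1 h1
    · have : Arr m (∑ i ∈ Finset.range m, (D i (cext c i)).val * 18 ^ i) j2
          = ∑ i ∈ Finset.range m, s2 i * (vb j2) ^ i := by
        unfold Arr
        refine Finset.sum_congr rfl (fun i hi => ?_)
        rw [digit_extract 18 (by norm_num) i m _ (fun k _ => hlt k) (Finset.mem_range.mp hi),
          hDB2]
      rw [this, hs2]
      exact digits_sum _ (vb_two _) m σ2 h2

lemma v_eq_vb (m : ℕ) (j : Fin 4) :
    (if (j : ℕ) = 0 then 2 ^ m else 3 ^ m) = vb (j : ℕ) ^ m := by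
  unfold vb; split <;> simp_all

end Stmt15Aux

/-- Theorem: for every `m ≥ 2` there exists a
`(2^m - 1, 2)`-DTA(`18^m`; 4, `(2^m)^1 (3^m)^3`) achieving the lower bound. -/
theorem stmt_15 (m : ℕ) (hm : 2 ≤ m) :
    ∃ A : Fin (18 ^ m) → Fin 4 → ℕ,
      IsDTA (fun j : Fin 4 => if (j : ℕ) = 0 then 2 ^ m else 3 ^ m)
        (2 ^ m - 1) 2 A := by
  classical
  open Stmt15Aux in
  set v : Fin 4 → ℕ := fun j : Fin 4 => if (j : ℕ) = 0 then 2 ^ m else 3 ^ m with hv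
  set A : Fin (18 ^ m) → Fin 4 → ℕ := fun r j => Arr m r.val j.val with hA
  have hveq : ∀ j : Fin 4, v j = vb (j : ℕ) ^ m := fun j => v_eq_vb m j
  refine ⟨A, ?_, ?_⟩
  · intro r j
    have h := Arr_lt m r.val j.val
    exact lt_of_lt_of_eq h (hveq j).symm
  intro T hT Ts hTscard hTs
  have mem_rho : ∀ (S : Finset (Fin 4 × ℕ)) (r : Fin (18 ^ m)),
      r ∈ rho A S ↔ ∀ p ∈ S, A r p.1 = p.2 := by
    intro S r; simp [rho]
  have rho3 : ∀ S : Finset (Fin 4 × ℕ), 3 ≤ S.card → (rho A S).card ≤ 1 := by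
    intro S hS
    rcases Nat.lt_or_ge (S.image Prod.fst).card 3 with himg | himg
    · have hmap : ∀ p ∈ S, p.1 ∈ S.image Prod.fst := fun p hp => Finset.mem_image_of_mem _ hp
      have hlt2 : (S.image Prod.fst).card < S.card := by omega
      obtain ⟨p, hp, q, hq, hpq, he⟩ :=
        Finset.exists_ne_map_eq_of_card_lt_of_maps_to hlt2 hmap
      have : rho A S = ∅ := by
        rw [Finset.eq_empty_iff_forall_notMem]
        intro r hr
        rw [mem_rho] at hr
        have h1 := hr p hp
        have h2 := hr q hq
        exact hpq (Prod.ext he (by rw [← h1, ← h2, he]))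
      simp [this]
    · have h3 : 2 < (S.image Prod.fst).card := by omega
      obtain ⟨j1, j2, j3, hj1, hj2, hj3, h12, h13, h23⟩ :=
        Finset.two_lt_card_iff.mp h3
      rw [Finset.card_le_one]
      intro r hr s hs
      rw [mem_rho] at hr hs
      have agree : ∀ j : Fin 4, j ∈ S.image Prod.fst →
          Arr m r.val j.val = Arr m s.val j.val := by
        intro j hj
        obtain ⟨p, hp, hpj⟩ := Finset.mem_image.mp hj
        have h1 := hr p hp
        have h2 := hs p hp
        simp only [hA] at h1 h2
        rw [← hpj]
        rw [h1, h2]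
      have := Arr_ss m r.val s.val r.isLt s.isLt j1 j2 j3 h12 h13 h23
        (agree j1 hj1) (agree j2 hj2) (agree j3 hj3)
      exact Fin.val_injective this
  have inter_le : ∀ T' ∈ Ts, T ≠ T' → (rho A T ∩ rho A T').card ≤ 1 := by
    intro T' hT' hne
    have hU : rho A T ∩ rho A T' = rho A (T ∪ T') := by
      ext r
      simp only [Finset.mem_inter, mem_rho, Finset.mem_union]
      constructor
      · rintro ⟨h1, h2⟩ p hp
        rcases hp with hp | hp
        · exact h1 p hp
        · exact h2 p hp
      · intro h
        exact ⟨fun p hp => h p (Or.inl hp), fun p hp => h p (Or.inr hp)⟩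
    rw [hU]
    refine rho3 _ ?_
    by_contra hlt
    push_neg at hlt
    have hsubT : T ⊆ T ∪ T' := Finset.subset_union_left
    have hcT : T.card = 2 := hT.1
    have hcT' : T'.card = 2 := (hTs T' hT').1
    have hEq : T = T ∪ T' := Finset.eq_of_subset_of_card_le hsubT (by omega)
    have : T' ⊆ T := by rw [hEq]; exact Finset.subset_union_right
    exact hne (Finset.eq_of_subset_of_card_le this (by omega)).symm
  have cov : 2 ^ m ≤ (rho A T).card := by
    obtain ⟨hc2, hi2, hval⟩ := hT
    obtain ⟨p, q, hpq, hTpq⟩ := Finset.card_eq_two.mp hc2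
    have hcol : p.1 ≠ q.1 := by
      intro h
      rw [hTpq] at hi2
      rw [Finset.image_insert, Finset.image_singleton, h] at hi2
      simp at hi2
    have hp' : p.2 < vb (p.1 : ℕ) ^ m :=
      lt_of_lt_of_eq (hval p (by rw [hTpq]; simp)) (hveq p.1)
    have hq' : q.2 < vb (q.1 : ℕ) ^ m :=
      lt_of_lt_of_eq (hval q (by rw [hTpq]; simp)) (hveq q.1)
    obtain ⟨g, hginj, hg⟩ := Arr_cov m p.1 q.1 hcol p.2 q.2 hp' hq'
    have hle : (Finset.univ : Finset (Fin m → Fin 2)).card ≤ (rho A T).card := by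
      apply Finset.card_le_card_of_injOn (fun c => (⟨g c, (hg c).1⟩ : Fin (18 ^ m)))
      · intro c _
        rw [Finset.mem_coe, mem_rho]
        intro pp hpp
        rw [hTpq] at hpp
        rcases Finset.mem_insert.mp hpp with h | h
        · rw [h]; exact (hg c).2.1
        · rw [Finset.mem_singleton.mp h]; exact (hg c).2.2
      · intro c _ c' _ h
        exact hginj (congrArg Fin.val h)
    calc 2 ^ m = (Finset.univ : Finset (Fin m → Fin 2)).card := by
          rw [Finset.card_univ]; simp
      _ ≤ _ := hle
  constructor
  · intro hsub
    by_contra hTnot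
    have hcap : rho A T ∩ rhoSet A Ts = rho A T := Finset.inter_eq_left.mpr hsub
    have hbi : rhoSet A Ts = Ts.biUnion (rho A) := Finset.sup_eq_biUnion Ts (rho A)
    have hsub2 : rho A T ∩ rhoSet A Ts ⊆ Ts.biUnion (fun T' => rho A T ∩ rho A T') := by
      intro r hr
      rw [Finset.mem_inter, hbi, Finset.mem_biUnion] at hr
      obtain ⟨h1, T', hT', h2⟩ := hr
      exact Finset.mem_biUnion.mpr ⟨T', hT', Finset.mem_inter.mpr ⟨h1, h2⟩⟩
    have hcard : (rho A T).card ≤ 2 ^ m - 1 := by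
      calc (rho A T).card = (rho A T ∩ rhoSet A Ts).card := by rw [hcap]
        _ ≤ (Ts.biUnion (fun T' => rho A T ∩ rho A T')).card := Finset.card_le_card hsub2
        _ ≤ ∑ T' ∈ Ts, (rho A T ∩ rho A T').card := Finset.card_biUnion_le
        _ ≤ ∑ T' ∈ Ts, 1 := Finset.sum_le_sum
            (fun T' hT' => inter_le T' hT' (fun he => hTnot (he ▸ hT')))
        _ = Ts.card := by simp
        _ = 2 ^ m - 1 := hTscard
    have hpos : 1 ≤ 2 ^ m := Nat.one_le_two_pow
    omega
  · intro hmem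
    show rho A T ≤ Ts.sup (rho A)
    exact Finset.le_sup hmem
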